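/- Suppose d is long for k, L ≥ 1, and r_0, …, r_{L−1} are LE-conditions in Q_{d,s,k}, say r_l = (d,s,φ_l). Then there exists an LE-condition r* = (d,s,φ*) ∈ Q_{k+1} such that for every LE-condition r with r ≤ r*, there exists an LE-condition r′ with r′ ≤ r and |{l < L : r′ ≤ r_l}| ≥ (1 − 1/|d|)·L. (That is, Q_{d,s,k} is (1/|d|)-pseudo-fusion-linked, with the pseudo-fusion lying in Q_{k+1}.) -/

import Mathlib

open scoped Classical

/-- An LE-condition for the poset `LE_b`: a triple `(d, s, φ)` where `d` is a finite
binary sequence, `s n < b n` for `n < |d|`, `φ n ⊆ {0,…,b n − 1}`, and for some `k`,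
`|φ n| ≤ b n · 2^{−n/2^k}` for all `n ≥ |d|`. -/
structure LECond (b : ℕ → ℕ) where
  d : List Bool
  s : ℕ → ℕ
  φ : ℕ → Finset ℕ
  s_lt : ∀ n < d.length, s n < b n
  φ_sub : ∀ n, φ n ⊆ Finset.range (b n)
  bound : ∃ k : ℕ, ∀ n, d.length ≤ n →
    ((φ n).card : ℝ) ≤ (b n : ℝ) * (2 : ℝ) ^ (-(n : ℝ) / (2 : ℝ) ^ k)

/-- Membership in `Q_k`: the witness `k` works. -/
def LECond.inQ {b : ℕ → ℕ} (p : LECond b) (k : ℕ) : Prop :=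
  ∀ n, p.d.length ≤ n →
    ((p.φ n).card : ℝ) ≤ (b n : ℝ) * (2 : ℝ) ^ (-(n : ℝ) / (2 : ℝ) ^ k)

/-- Membership in `Q_{d,s,k}`: in `Q_k` with first two coordinates `d`, `s`. -/
def LECond.inQds {b : ℕ → ℕ} (p : LECond b) (d : List Bool) (s : ℕ → ℕ) (k : ℕ) : Prop :=
  p.d = d ∧ (∀ n < d.length, p.s n = s n) ∧ p.inQ k

/-- The extension order on LE-conditions: `q ≤ p`. -/
def LECond.le {b : ℕ → ℕ} (q p : LECond b) : Prop :=
  p.d <+: q.d ∧ (∀ n < p.d.length, q.s n = p.s n) ∧ (∀ n, p.φ n ⊆ q.φ n) ∧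
  ∀ n, q.d.getD n false = true → ¬ (p.d.getD n false = true) → q.s n ∉ p.φ n

/-- `d` is long for `k`: `|d| ≥ 2` and `2^{−n/2^k} ≤ 1/(n²(n+1)²)` for all `n ≥ |d|`. -/
def LongFor (k : ℕ) (d : List Bool) : Prop :=
  2 ≤ d.length ∧ ∀ n : ℕ, d.length ≤ n →
    (2 : ℝ) ^ (-(n : ℝ) / (2 : ℝ) ^ k) ≤ 1 / ((n : ℝ) ^ 2 * ((n : ℝ) + 1) ^ 2)

private noncomputable def tt (j n : ℕ) : ℝ := (2:ℝ) ^ (-(n : ℝ) / (2:ℝ) ^ j)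

private lemma tt_pos (j n : ℕ) : 0 < tt j n := Real.rpow_pos_of_pos (by norm_num) _

private lemma tt_sq (j n : ℕ) : tt j n = (tt (j+1) n) ^ 2 := by
  unfold tt
  rw [← Real.rpow_natCast ((2:ℝ) ^ (-(n:ℝ)/(2:ℝ)^(j+1))) 2, ← Real.rpow_mul (by norm_num)]
  congr 1
  have : (2:ℝ)^(j+1) = 2 * 2^j := by ring
  rw [this]; push_cast; field_simp

private lemma tt_mono (j₁ j₂ n : ℕ) (h : j₁ ≤ j₂) : tt j₁ n ≤ tt j₂ n := by
  apply Real.rpow_le_rpow_of_exponent_le one_le_two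
  rw [neg_div, neg_div, neg_le_neg_iff]
  apply div_le_div_of_nonneg_left (by positivity) (by positivity)
  exact_mod_cast Nat.pow_le_pow_right (by norm_num) h

private lemma pref_getD (l₁ l₂ : List Bool) (h : l₁ <+: l₂) (n : ℕ) (hn : n < l₁.length) :
    l₂.getD n false = l₁.getD n false := by
  rw [List.getD_eq_getElem _ _ hn, List.getD_eq_getElem _ _ (hn.trans_le h.length_le)]
  exact (List.IsPrefix.getElem h hn).symm

private lemma app_getD (l₁ : List Bool) (m n : ℕ) (hn : l₁.length ≤ n) :
    (l₁ ++ List.replicate m false).getD n false = false := by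
  rcases lt_or_ge n (l₁.length + m) with h | h
  · rw [List.getD_eq_getElem _ _ (by simpa using h), List.getElem_append_right hn]
    simp
  · rw [List.getD_eq_default]; simpa using h

private lemma tele (a M : ℕ) (ha : 1 ≤ a) :
    ∑ n ∈ Finset.Ico a M, (1:ℝ)/((n:ℝ)*((n:ℝ)+1)) ≤ 1/(a:ℝ) := by
  rcases le_or_gt a M with hM | hM
  · have key : ∑ n ∈ Finset.Ico a M, (1:ℝ)/((n:ℝ)*((n:ℝ)+1)) = 1/(a:ℝ) - 1/(M:ℝ) := by
      induction M, hM using Nat.le_induction with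
      | base => simp
      | succ M hM ih =>
          rw [Finset.sum_Ico_succ_top hM, ih]
          have hM0 : (M:ℝ) ≠ 0 := by
            have : 1 ≤ M := le_trans ha hM
            exact_mod_cast Nat.one_le_iff_ne_zero.mp this
          push_cast; field_simp; ring
    rw [key]
    have : 0 ≤ 1/(M:ℝ) := by positivity
    linarith
  · rw [Finset.Ico_eq_empty (by omega)]
    simp only [Finset.sum_empty]
    positivity

private noncomputable def cnt {b : ℕ → ℕ} (r : ℕ → LECond b) (L n j : ℕ) : ℕ :=
  ((Finset.range L).filter fun l => j ∈ (r l).φ n).card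

private noncomputable def phis (b : ℕ → ℕ) (r : ℕ → LECond b) (L k n : ℕ) : Finset ℕ :=
  (Finset.range (b n)).filter fun j => (L:ℝ) * tt (k+1) n < cnt r L n j

/-- `Q_{d,s,k}` is `1/|d|`-pseudo-fusion-linked for long `d`, with pseudo-fusions in
`Q_{k+1}`: given `r 0, …, r (L−1) ∈ Q_{d,s,k}`, there is `r* = (d,s,φ*) ∈ Q_{k+1}` such
that densely below `r*`, conditions extend at least a `(1 − 1/|d|)` fraction of the
`r l`. -/
theorem stmt10 (b : ℕ → ℕ) (hb : ∀ n, 2 ^ n ≤ b n)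
    (d : List Bool) (s : ℕ → ℕ) (k : ℕ) (hd : LongFor k d)
    (L : ℕ) (hL : 1 ≤ L) (r : ℕ → LECond b) (hr : ∀ l < L, (r l).inQds d s k) :
    ∃ rstar : LECond b, rstar.d = d ∧ (∀ n < d.length, rstar.s n = s n) ∧
      rstar.inQ (k + 1) ∧
      ∀ r1 : LECond b, r1.le rstar →
        ∃ r2 : LECond b, r2.le r1 ∧
          (1 - 1 / (d.length : ℝ)) * (L : ℝ) ≤
            (((Finset.range L).filter fun l => r2.le (r l)).card : ℝ) := by
  obtain ⟨hd2, hdlong⟩ := hd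
  have hbpos : ∀ n, 0 < b n := fun n => lt_of_lt_of_le (Nat.pow_pos (by norm_num : 0 < 2)) (hb n)
  have hrd : ∀ l < L, (r l).d = d := fun l hl => (hr l hl).1
  have hrs : ∀ l < L, ∀ n < d.length, (r l).s n = s n := fun l hl => (hr l hl).2.1
  have hrQ : ∀ l < L, ∀ n, d.length ≤ n → (((r l).φ n).card : ℝ) ≤ (b n : ℝ) * tt k n := by
    intro l hl n hn
    have h := (hr l hl).2.2 n
    rw [hrd l hl] at h
    exact h hn
  -- double counting
  have hsum : ∀ n, d.length ≤ n →
      (∑ j ∈ Finset.range (b n), (cnt r L n j : ℝ)) ≤ (L:ℝ) * ((b n : ℝ) * tt k n) := by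
    intro n hn
    have key : ∑ j ∈ Finset.range (b n), cnt r L n j
        = ∑ l ∈ Finset.range L, ((r l).φ n).card := by
      unfold cnt
      simp only [Finset.card_filter]
      rw [Finset.sum_comm]
      refine Finset.sum_congr rfl fun l _ => ?_
      rw [← Finset.card_filter, Finset.filter_mem_eq_inter,
        Finset.inter_eq_right.mpr ((r l).φ_sub n)]
    have : (∑ j ∈ Finset.range (b n), (cnt r L n j : ℝ))
        = ∑ l ∈ Finset.range L, (((r l).φ n).card : ℝ) := by
      exact_mod_cast key
    rw [this]
    calc ∑ l ∈ Finset.range L, (((r l).φ n).card : ℝ)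
        ≤ ∑ _l ∈ Finset.range L, (b n : ℝ) * tt k n :=
          Finset.sum_le_sum fun l hl => hrQ l (Finset.mem_range.mp hl) n hn
      _ = (L:ℝ) * ((b n : ℝ) * tt k n) := by
          rw [Finset.sum_const, Finset.card_range, nsmul_eq_mul]
  -- the fused condition's sets are small
  have hφscard : ∀ n, d.length ≤ n → ((phis b r L k n).card : ℝ) ≤ (b n : ℝ) * tt (k+1) n := by
    intro n hn
    have h1 : ((phis b r L k n).card : ℝ) * ((L:ℝ) * tt (k+1) n)
        ≤ ∑ j ∈ phis b r L k n, (cnt r L n j : ℝ) := by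
      rw [← nsmul_eq_mul]
      refine Finset.card_nsmul_le_sum _ _ _ fun j hj => ?_
      exact le_of_lt (Finset.mem_filter.mp hj).2
    have h2 : ∑ j ∈ phis b r L k n, (cnt r L n j : ℝ)
        ≤ ∑ j ∈ Finset.range (b n), (cnt r L n j : ℝ) :=
      Finset.sum_le_sum_of_subset_of_nonneg (Finset.filter_subset _ _)
        (fun j _ _ => by positivity)
    have h3 : ((phis b r L k n).card : ℝ) * ((L:ℝ) * tt (k+1) n)
        ≤ ((b n : ℝ) * tt (k+1) n) * ((L:ℝ) * tt (k+1) n) := by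
      calc ((phis b r L k n).card : ℝ) * ((L:ℝ) * tt (k+1) n)
          ≤ (L:ℝ) * ((b n : ℝ) * tt k n) := (h1.trans h2).trans (hsum n hn)
        _ = ((b n : ℝ) * tt (k+1) n) * ((L:ℝ) * tt (k+1) n) := by rw [tt_sq k n]; ring
    have hpos : 0 < (L:ℝ) * tt (k+1) n := by
      have := tt_pos (k+1) n
      have hL' : (0:ℝ) < L := by exact_mod_cast hL
      positivity
    exact le_of_mul_le_mul_right h3 hpos
  refine ⟨⟨d, (r 0).s, phis b r L k, ?_, fun n => Finset.filter_subset _ _, ⟨k+1, hφscard⟩⟩,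
    rfl, fun n hn => hrs 0 hL n hn, hφscard, ?_⟩
  · intro n hn
    have h := (r 0).s_lt n
    rw [hrd 0 hL] at h
    exact h hn
  intro r1 hr1
  obtain ⟨hpre, hs1, hφ1, hnew1⟩ := hr1
  simp only at hpre hs1 hnew1
  obtain ⟨k₁, hk₁⟩ := r1.bound
  set m := max k₁ k with hm
  set N := max r1.d.length (2^(m+1) * (L+1)) with hN
  have hd_r1 : d.length ≤ r1.d.length := hpre.length_le
  have hs_lt2 : ∀ n < (r1.d ++ List.replicate (N - r1.d.length) false).length,
      (fun n => if n < r1.d.length then r1.s n else 0) n < b n := by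
    intro n _
    by_cases h : n < r1.d.length
    · simpa [h] using r1.s_lt n h
    · simpa [h] using hbpos n
  have hφ_sub2 : ∀ n, (r1.φ n ∪ (Finset.range L).biUnion fun l => (r l).φ n)
      ⊆ Finset.range (b n) := fun n =>
    Finset.union_subset (r1.φ_sub n) (Finset.biUnion_subset.mpr fun l _ => (r l).φ_sub n)
  have hbound2 : ∀ n, (r1.d ++ List.replicate (N - r1.d.length) false).length ≤ n →
      (((r1.φ n ∪ (Finset.range L).biUnion fun l => (r l).φ n)).card : ℝ)
        ≤ (b n : ℝ) * tt (m+1) n := by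
    intro n hn
    have hlen : (r1.d ++ List.replicate (N - r1.d.length) false).length = N := by
      simp [Nat.add_sub_cancel' (le_max_left _ _)]; exact Nat.add_sub_cancel' (le_max_left _ _)
    rw [hlen] at hn
    have hn1 : r1.d.length ≤ n := le_trans (le_max_left _ _) hn
    have hn2 : 2^(m+1) * (L+1) ≤ n := le_trans (le_max_right _ _) hn
    have hnd : d.length ≤ n := le_trans hd_r1 hn1
    have hcard : (((r1.φ n ∪ (Finset.range L).biUnion fun l => (r l).φ n)).card : ℝ)
        ≤ ((L:ℝ) + 1) * ((b n : ℝ) * tt m n) := by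
      have hA : ((r1.φ n ∪ (Finset.range L).biUnion fun l => (r l).φ n)).card
          ≤ (r1.φ n).card + ∑ l ∈ Finset.range L, ((r l).φ n).card :=
        (Finset.card_union_le _ _).trans (by
          gcongr
          exact Finset.card_biUnion_le)
      have hB : ((r1.φ n).card : ℝ) ≤ (b n : ℝ) * tt m n :=
        (hk₁ n hn1).trans (by
          have := tt_mono k₁ m n (le_max_left _ _)
          have hb0 : (0:ℝ) ≤ b n := by positivity
          exact mul_le_mul_of_nonneg_left this hb0)
      have hC : ∀ l ∈ Finset.range L, (((r l).φ n).card : ℝ) ≤ (b n : ℝ) * tt m n := by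
        intro l hl
        refine (hrQ l (Finset.mem_range.mp hl) n hnd).trans ?_
        have := tt_mono k m n (le_max_right _ _)
        have hb0 : (0:ℝ) ≤ b n := by positivity
        exact mul_le_mul_of_nonneg_left this hb0
      calc (((r1.φ n ∪ (Finset.range L).biUnion fun l => (r l).φ n)).card : ℝ)
          ≤ ((r1.φ n).card : ℝ) + ∑ l ∈ Finset.range L, (((r l).φ n).card : ℝ) := by
            exact_mod_cast hA
        _ ≤ (b n : ℝ) * tt m n + (L:ℝ) * ((b n : ℝ) * tt m n) := by
            refine add_le_add hB ?_
            calc ∑ l ∈ Finset.range L, (((r l).φ n).card : ℝ)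
                ≤ ∑ _l ∈ Finset.range L, (b n : ℝ) * tt m n := Finset.sum_le_sum hC
              _ = (L:ℝ) * ((b n : ℝ) * tt m n) := by
                  rw [Finset.sum_const, Finset.card_range, nsmul_eq_mul]
        _ = ((L:ℝ) + 1) * ((b n : ℝ) * tt m n) := by ring
    have hsmall : ((L:ℝ) + 1) * tt (m+1) n ≤ 1 := by
      have h1 : tt (m+1) n ≤ (2:ℝ) ^ (-((L:ℝ)+1)) := by
        apply Real.rpow_le_rpow_of_exponent_le one_le_two
        rw [neg_div, neg_le_neg_iff, le_div_iff₀ (by positivity)]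
        calc ((L:ℝ)+1) * (2:ℝ)^(m+1) = ((L+1) * 2^(m+1) : ℕ) := by push_cast; ring
          _ ≤ (n:ℕ) := by exact_mod_cast (by rw [Nat.mul_comm]; exact hn2 : (L+1) * 2^(m+1) ≤ n)
      have h2 : ((L:ℝ)+1) * (2:ℝ) ^ (-((L:ℝ)+1)) ≤ 1 := by
        rw [Real.rpow_neg (by norm_num), mul_inv_le_iff₀ (by positivity), one_mul]
        calc ((L:ℝ)+1) = ((L+1 : ℕ) : ℝ) := by push_cast; ring
          _ ≤ ((2^(L+1) : ℕ) : ℝ) := by exact_mod_cast (Nat.lt_two_pow_self (n := L+1)).le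
          _ = (2:ℝ) ^ ((L:ℝ)+1) := by
              rw [show ((L:ℝ)+1) = ((L+1:ℕ):ℝ) by push_cast; ring, Real.rpow_natCast]
              push_cast; ring
      calc ((L:ℝ)+1) * tt (m+1) n ≤ ((L:ℝ)+1) * (2:ℝ)^(-((L:ℝ)+1)) := by
            refine mul_le_mul_of_nonneg_left h1 (by positivity)
        _ ≤ 1 := h2
    calc (((r1.φ n ∪ (Finset.range L).biUnion fun l => (r l).φ n)).card : ℝ)
        ≤ ((L:ℝ) + 1) * ((b n : ℝ) * tt m n) := hcard
      _ = (((L:ℝ) + 1) * tt (m+1) n) * ((b n : ℝ) * tt (m+1) n) := by rw [tt_sq m n]; ring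
      _ ≤ 1 * ((b n : ℝ) * tt (m+1) n) := by
          refine mul_le_mul_of_nonneg_right hsmall ?_
          have := (tt_pos (m+1) n).le
          positivity
      _ = (b n : ℝ) * tt (m+1) n := one_mul _
  set r2 : LECond b := ⟨r1.d ++ List.replicate (N - r1.d.length) false,
    fun n => if n < r1.d.length then r1.s n else 0,
    fun n => r1.φ n ∪ (Finset.range L).biUnion fun l => (r l).φ n,
    hs_lt2, hφ_sub2, ⟨m+1, hbound2⟩⟩ with hr2def
  have hr1pre2 : r1.d <+: r2.d := ⟨_, rfl⟩
  have hdpre2 : d <+: r2.d := hpre.trans hr1pre2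
  refine ⟨r2, ?_, ?_⟩
  · -- r2 ≤ r1
    refine ⟨hr1pre2, fun n hn => if_pos hn, fun n => Finset.subset_union_left, ?_⟩
    intro n h2 h1
    exfalso
    rcases lt_or_ge n r1.d.length with h | h
    · exact h1 (by rwa [pref_getD r1.d r2.d hr1pre2 n h] at h2)
    · have h2' : (r1.d ++ List.replicate (N - r1.d.length) false).getD n false = true := h2
      rw [app_getD r1.d _ n h] at h2'
      exact Bool.false_ne_true h2'
  · -- density bound
    set P : Finset ℕ := (Finset.Ico d.length r1.d.length).filter
      (fun n => r1.d.getD n false = true) with hP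
    set B : Finset ℕ := (Finset.range L).filter
      (fun l => ∃ n ∈ P, r1.s n ∈ (r l).φ n) with hB
    have hBbound : (B.card : ℝ) ≤ (L:ℝ) * (1 / d.length) := by
      have hsub : B ⊆ P.biUnion fun n => (Finset.range L).filter fun l => r1.s n ∈ (r l).φ n := by
        intro l hl
        rw [hB, Finset.mem_filter] at hl
        obtain ⟨hlL, n, hnP, hmem⟩ := hl
        exact Finset.mem_biUnion.mpr ⟨n, hnP, Finset.mem_filter.mpr ⟨hlL, hmem⟩⟩
      have hper : ∀ n ∈ P,
          ((((Finset.range L).filter fun l => r1.s n ∈ (r l).φ n).card : ℝ))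
          ≤ (L:ℝ) * (1/((n:ℝ)*((n:ℝ)+1))) := by
        intro n hnP
        rw [hP, Finset.mem_filter, Finset.mem_Ico] at hnP
        obtain ⟨⟨hnd, hnr⟩, hntrue⟩ := hnP
        have hns : r1.s n ∉ phis b r L k n := by
          refine hnew1 n hntrue ?_
          rw [List.getD_eq_default _ _ (by simpa using hnd)]
          exact Bool.false_ne_true
        have hmemrange : r1.s n ∈ Finset.range (b n) := Finset.mem_range.mpr (r1.s_lt n hnr)
        have hcnt : (cnt r L n (r1.s n) : ℝ) ≤ (L:ℝ) * tt (k+1) n := by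
          by_contra hcon
          exact hns (Finset.mem_filter.mpr ⟨hmemrange, lt_of_not_ge (fun h => hcon (by linarith))⟩)
        have httle : tt (k+1) n ≤ 1/((n:ℝ)*((n:ℝ)+1)) := by
          have h1 : tt (k+1) n ^ 2 ≤ (1/((n:ℝ)*((n:ℝ)+1))) ^ 2 := by
            rw [← tt_sq k n]
            refine (hdlong n hnd).trans_eq ?_
            rw [div_pow, one_pow, mul_pow]
          have hn2 : 2 ≤ n := le_trans hd2 hnd
          have hnpos : (0:ℝ) < (n:ℝ)*((n:ℝ)+1) := by
            have : (0:ℝ) < (n:ℝ) := by exact_mod_cast (by omega : 0 < n)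
            positivity
          exact (pow_le_pow_iff_left₀ (tt_pos (k+1) n).le (by positivity) (by norm_num)).mp h1
        calc ((((Finset.range L).filter fun l => r1.s n ∈ (r l).φ n).card : ℝ))
            = (cnt r L n (r1.s n) : ℝ) := rfl
          _ ≤ (L:ℝ) * tt (k+1) n := hcnt
          _ ≤ (L:ℝ) * (1/((n:ℝ)*((n:ℝ)+1))) := by
              refine mul_le_mul_of_nonneg_left httle (by positivity)
      calc (B.card : ℝ)
          ≤ ((P.biUnion fun n => (Finset.range L).filter fun l =>
              r1.s n ∈ (r l).φ n).card : ℝ) := by exact_mod_cast Finset.card_le_card hsub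
        _ ≤ ∑ n ∈ P, ((((Finset.range L).filter fun l => r1.s n ∈ (r l).φ n).card : ℝ)) := by
            exact_mod_cast Finset.card_biUnion_le
        _ ≤ ∑ n ∈ P, (L:ℝ) * (1/((n:ℝ)*((n:ℝ)+1))) := Finset.sum_le_sum hper
        _ ≤ ∑ n ∈ Finset.Ico d.length r1.d.length, (L:ℝ) * (1/((n:ℝ)*((n:ℝ)+1))) := by
            refine Finset.sum_le_sum_of_subset_of_nonneg (Finset.filter_subset _ _) ?_
            intro n hn _
            have : (0:ℝ) ≤ 1/((n:ℝ)*((n:ℝ)+1)) := by positivity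
            positivity
        _ = (L:ℝ) * ∑ n ∈ Finset.Ico d.length r1.d.length, (1:ℝ)/((n:ℝ)*((n:ℝ)+1)) := by
            rw [Finset.mul_sum]
        _ ≤ (L:ℝ) * (1 / d.length) := by
            refine mul_le_mul_of_nonneg_left (tele d.length r1.d.length (by omega)) (by positivity)
    have hgood : Finset.range L \ B ⊆ (Finset.range L).filter fun l => r2.le (r l) := by
      intro l hl
      rw [Finset.mem_sdiff] at hl
      obtain ⟨hlL, hlB⟩ := hl
      have hlL' := Finset.mem_range.mp hlL
      refine Finset.mem_filter.mpr ⟨hlL, ?_, ?_, ?_, ?_⟩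
      · rw [hrd l hlL']
        exact hdpre2
      · intro n hn
        rw [hrd l hlL'] at hn
        have h1 : n < r1.d.length := lt_of_lt_of_le hn hd_r1
        show (if n < r1.d.length then r1.s n else 0) = (r l).s n
        rw [if_pos h1, hs1 n hn, hrs l hlL' n hn]
        exact (hrs 0 hL n hn).symm ▸ rfl
      · intro n x hx
        exact Finset.mem_union_right _ (Finset.mem_biUnion.mpr ⟨l, hlL, hx⟩)
      · intro n h2 h1
        rw [hrd l hlL'] at h1
        rcases lt_or_ge n d.length with hn | hn
        · exact absurd (by rwa [pref_getD d r2.d hdpre2 n hn] at h2) h1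
        rcases lt_or_ge n r1.d.length with hn' | hn'
        · have htrue : r1.d.getD n false = true := by
            rw [← pref_getD r1.d r2.d hr1pre2 n hn']
            exact h2
          have hnP : n ∈ P := Finset.mem_filter.mpr ⟨Finset.mem_Ico.mpr ⟨hn, hn'⟩, htrue⟩
          show (if n < r1.d.length then r1.s n else 0) ∉ (r l).φ n
          rw [if_pos hn']
          intro hc
          exact hlB (Finset.mem_filter.mpr ⟨hlL, n, hnP, hc⟩)
        · exfalso
          have h2' : (r1.d ++ List.replicate (N - r1.d.length) false).getD n false = true := h2
          rw [app_getD r1.d _ n hn'] at h2'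
          exact Bool.false_ne_true h2'
    have hBL : B.card ≤ L := by
      calc B.card ≤ (Finset.range L).card := Finset.card_le_card (hB ▸ Finset.filter_subset _ _)
        _ = L := Finset.card_range L
    have hGcard : (Finset.range L \ B).card = L - B.card := by
      rw [Finset.card_sdiff_of_subset (hB ▸ Finset.filter_subset _ _), Finset.card_range]
    calc (1 - 1/(d.length:ℝ)) * (L:ℝ) = (L:ℝ) - (L:ℝ) * (1/(d.length:ℝ)) := by ring
      _ ≤ (L:ℝ) - (B.card : ℝ) := by linarith [hBbound]
      _ = ((Finset.range L \ B).card : ℝ) := by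
          rw [hGcard, Nat.cast_sub hBL]
      _ ≤ (((Finset.range L).filter fun l => r2.le (r l)).card : ℝ) := by
          exact_mod_cast Finset.card_le_card hgood
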